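/- arXiv:2008.03841 — 6 statements merged into one kernel-verified Lean document; each statement's English description precedes it below -/
import Mathlib

section
/- Consider the ODE system along a flow line: ė = e·[(1 + c_s²)·(ṅ/n) − (λe + 1)/τ₀] + (1 − λ(ϱ+p))(ϱ+p)/τ₀, where ϱ + p ≥ 0, 1 − λ(ϱ+p) ≥ 0, τ₀ > 0, n > 0, and all coefficient functions are continuous in τ. If e(0) ≥ 0 then e(τ) ≥ 0 for all τ ≥ 0 in the interval of existence. -/
open Set Filter Topology

theorem stmt9 (e cs2 ndot n lam tau0 rp : ℝ → ℝ)
    (hcs2 : Continuous cs2) (hndot : Continuous ndot) (hncont : Continuous n)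
    (hlamc : Continuous lam) (htauc : Continuous tau0) (hrpc : Continuous rp)
    (hn : ∀ τ, 0 ≤ τ → 0 < n τ)
    (htau : ∀ τ, 0 ≤ τ → 0 < tau0 τ)
    (hrp : ∀ τ, 0 ≤ τ → 0 ≤ rp τ)
    (hlam : ∀ τ, 0 ≤ τ → 0 ≤ 1 - lam τ * rp τ)
    (hderiv : ∀ τ, 0 ≤ τ → HasDerivAt e
      (e τ * ((1 + cs2 τ) * (ndot τ / n τ) - (lam τ * e τ + 1) / tau0 τ)
        + (1 - lam τ * rp τ) * rp τ / tau0 τ) τ)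
    (h0 : 0 ≤ e 0) :
    ∀ τ, 0 ≤ τ → 0 ≤ e τ := by
  -- continuity of e on [0, ∞)
  have econt : ContinuousOn e (Ici 0) := fun τ hτ =>
    ((hderiv τ hτ).continuousAt).continuousWithinAt
  intro t₁ ht₁
  by_contra hneg
  push_neg at hneg
  -- the set where e is nonnegative on [0, t₁]
  set S : Set ℝ := Icc 0 t₁ ∩ e ⁻¹' (Ici 0) with hS
  have hSne : S.Nonempty := ⟨0, ⟨le_refl 0, ht₁⟩, h0⟩
  have hSbdd : BddAbove S := ⟨t₁, fun x hx => hx.1.2⟩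
  have hSclosed : IsClosed S :=
    (econt.mono (fun x hx => hx.1)).preimage_isClosed_of_isClosed isClosed_Icc isClosed_Ici
  set t₀ := sSup S with ht₀def
  have ht₀S : t₀ ∈ S := hSclosed.csSup_mem hSne hSbdd
  have ht₀0 : (0:ℝ) ≤ t₀ := ht₀S.1.1
  have ht₀t₁ : t₀ ≤ t₁ := ht₀S.1.2
  have ht₀lt : t₀ < t₁ := lt_of_le_of_ne ht₀t₁ (by
    intro h
    have h2 : (0:ℝ) ≤ e t₀ := ht₀S.2
    rw [h] at h2
    linarith)
  -- e ≤ 0 on (t₀, t₁]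
  have hle : ∀ x, t₀ < x → x ≤ t₁ → e x ≤ 0 := by
    intro x hx hx1
    by_contra h
    push_neg at h
    exact absurd (le_csSup hSbdd ⟨⟨le_trans ht₀0 hx.le, hx1⟩, h.le⟩) (not_le.mpr hx)
  -- e t₀ = 0
  have het₀ : e t₀ = 0 := by
    have h00 : (0:ℝ) ≤ e t₀ := ht₀S.2
    rcases lt_or_eq_of_le h00 with h | h
    · exfalso
      have hc : ContinuousAt e t₀ := (hderiv t₀ ht₀0).continuousAt
      have h1 : ∀ᶠ x in 𝓝[>] t₀, 0 < e x :=
        (hc.eventually (eventually_gt_nhds h)).filter_mono nhdsWithin_le_nhds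
      have h2 : ∀ᶠ x in 𝓝[>] t₀, x < t₁ :=
        eventually_nhdsWithin_of_eventually_nhds (eventually_lt_nhds ht₀lt)
      have h3 : ∀ᶠ x in 𝓝[>] t₀, x ∈ Ioi t₀ := eventually_mem_nhdsWithin
      obtain ⟨x, hx1, hx2, hx3⟩ := ((h1.and (h2.and h3)).exists)
      exact absurd (hle x hx3 hx2.le) (not_le.mpr hx1)
    · exact h.symm
  -- notation for the coefficient
  obtain ⟨A, hA⟩ : ∃ A : ℝ → ℝ, ∀ τ, A τ =
      (1 + cs2 τ) * (ndot τ / n τ) - (lam τ * e τ + 1) / tau0 τ :=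
    ⟨_, fun τ => rfl⟩
  have hsub : Icc t₀ t₁ ⊆ Ici (0:ℝ) := fun x hx => le_trans ht₀0 hx.1
  have hAcont : ContinuousOn A (Icc t₀ t₁) := by
    simp only [funext hA]
    apply ContinuousOn.sub
    · exact ((continuous_const.add hcs2).continuousOn.mul
        (hndot.continuousOn.div hncont.continuousOn
          (fun x hx => (hn x (hsub hx)).ne')))
    · exact (((hlamc.continuousOn.mul (econt.mono hsub)).add continuousOn_const).div
        htauc.continuousOn (fun x hx => (htau x (hsub hx)).ne'))
  obtain ⟨K, hK⟩ := (isCompact_Icc).exists_bound_of_continuousOn hAcont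
  -- Grönwall (one-sided) on [t₀, t₁] for f = -e
  have key := le_gronwallBound_of_liminf_deriv_right_le
    (f := fun t => -e t)
    (f' := fun t => -(e t * A t + (1 - lam t * rp t) * rp t / tau0 t))
    (δ := 0) (K := K) (ε := 0) (a := t₀) (b := t₁)
    ((econt.mono hsub).neg)
    ?_
    (by simp [het₀])
    ?_ t₁ ⟨ht₀t₁, le_refl _⟩
  · rw [gronwallBound_ε0, zero_mul] at key
    have : -e t₁ ≤ 0 := key
    linarith
  · -- liminf slope condition from actual derivative
    intro x hx r hr
    have hd : HasDerivWithinAt (fun t => -e t)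
        (-(e x * A x + (1 - lam x * rp x) * rp x / tau0 x)) (Ici x) x := by
      rw [hA x]
      exact ((hderiv x (le_trans ht₀0 hx.1)).neg).hasDerivWithinAt
    have hslope := hasDerivWithinAt_iff_tendsto_slope.mp hd
    have hIci : (Ici x) \ {x} = Ioi x := by
      ext z; simp [Ici_sdiff_left]
    rw [hIci] at hslope
    have hev : ∀ᶠ z in 𝓝[>] x, slope (fun t => -e t) x z < r :=
      hslope.eventually (eventually_lt_nhds hr)
    refine (hev.mono fun z hz => ?_).frequently
    have : slope (fun t => -e t) x z = (z - x)⁻¹ * (-e z - -e x) := by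
      simp [slope_def_field, div_eq_inv_mul]
    linarith [this ▸ hz]
  · -- the one-sided bound
    intro x hx
    have hx0 : (0:ℝ) ≤ x := le_trans ht₀0 hx.1
    have hex : e x ≤ 0 := by
      rcases eq_or_lt_of_le hx.1 with h | h
      · rw [← h, het₀]
      · exact hle x h hx.2.le
    have hC : 0 ≤ (1 - lam x * rp x) * rp x / tau0 x :=
      div_nonneg (mul_nonneg (hlam x hx0) (hrp x hx0)) (htau x hx0).le
    have hAx : A x ≤ K := by
      have := hK x ⟨hx.1, hx.2.le⟩
      rw [Real.norm_eq_abs] at this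
      exact (abs_le.mp this).2
    have h1 : -e x * A x ≤ -e x * K :=
      mul_le_mul_of_nonneg_left hAx (by linarith)
    show -(e x * A x + (1 - lam x * rp x) * rp x / tau0 x) ≤ K * -e x + 0
    have h2 : -(e x * A x) ≤ K * -e x := by nlinarith
    linarith
end

section
/- The 3×3 matrix (𝒜⁰)^{-1}𝒜¹ arising from the 1+1-dimensional Müller-Israel-Stewart system, where 𝒜⁰ = [[u⁰, (ϱ+q)u¹/u⁰, 0],[0, (ϱ+q)/u⁰, u¹/u⁰],[0, c²(ϱ+q)u¹/u⁰, u⁰]] and 𝒜¹ = [[u¹, ϱ+q, 0],[0, (ϱ+q)u¹/(u⁰)², 1],[0, c²(ϱ+q), u¹]], with (u⁰)² = 1 + (u¹)², ϱ+q > 0, u⁰ > 0, and 0 < c < 1, has eigenvalues λ¹ = u¹/u⁰, λ² = (u¹ + c·u⁰)/(c·u¹ + u⁰), λ³ = (−u¹ + c·u⁰)/(c·u¹ − u⁰). -/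
theorem stmt12 (u0 u1 ϱ q c : ℝ) (hu : u0^2 = 1 + u1^2) (hu0 : 1 ≤ u0)
    (hq : 0 < ϱ + q) (hc0 : 0 < c) (hc1 : c < 1) :
    let A0 : Matrix (Fin 3) (Fin 3) ℝ :=
      !![u0, (ϱ+q)*u1/u0, 0; 0, (ϱ+q)/u0, u1/u0; 0, c^2*(ϱ+q)*u1/u0, u0]
    let A1 : Matrix (Fin 3) (Fin 3) ℝ :=
      !![u1, ϱ+q, 0; 0, (ϱ+q)*u1/u0^2, 1; 0, c^2*(ϱ+q), u1]
    ∀ μ ∈ ({u1/u0, (u1 + c*u0)/(c*u1 + u0), (-u1 + c*u0)/(c*u1 - u0)} : Set ℝ),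
      Matrix.det (A0⁻¹ * A1 - μ • (1 : Matrix (Fin 3) (Fin 3) ℝ)) = 0 := by
  intro A0 A1 μ hμ
  have hu0' : u0 ≠ 0 := by positivity
  have hc2 : (0:ℝ) ≤ 1 - c^2 := by nlinarith
  have hkey : 0 < u0^2 - c^2 * u1^2 := by nlinarith [mul_nonneg hc2 (sq_nonneg u1)]
  have hp : u0 + c * u1 > 0 := by nlinarith [sq_nonneg (u0 + c*u1)]
  have hm : u0 - c * u1 > 0 := by nlinarith [sq_nonneg (u0 - c*u1)]
  have hdet : A0.det = (ϱ + q) * (u0 - c * u1) * (u0 + c * u1) / u0 := by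
    simp [A0, Matrix.det_fin_three, Matrix.vecHead, Matrix.vecTail]
    field_simp
    ring
  have hA0 : IsUnit A0.det := by
    rw [hdet]
    exact (by positivity : (0:ℝ) < _).ne'.isUnit
  have key : A0⁻¹ * A1 - μ • (1 : Matrix (Fin 3) (Fin 3) ℝ) = A0⁻¹ * (A1 - μ • A0) := by
    rw [Matrix.mul_sub, Matrix.mul_smul, Matrix.nonsing_inv_mul _ hA0]
  rw [key, Matrix.det_mul]
  have hd : (A1 - μ • A0).det = 0 := by
    have hfac : (A1 - μ • A0).det =
        (u1 - μ * u0) * ((ϱ+q)/u0^2 * ((u1 - μ*u0)^2 - c^2 * (u0 - μ*u1)^2)) := by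
      simp [A1, A0, Matrix.det_fin_three, Matrix.sub_apply, Matrix.smul_apply,
        Matrix.vecHead, Matrix.vecTail]
      field_simp
    rw [hfac]
    rcases hμ with h | h | h
    · rw [h]; field_simp; ring
    · rw [h]
      apply mul_eq_zero_of_right
      apply mul_eq_zero_of_right
      have hne : c*u1 + u0 ≠ 0 := by nlinarith
      rw [div_mul_eq_mul_div, div_mul_eq_mul_div, sub_div' hne, sub_div' hne, div_pow, div_pow]
      field_simp
      ring
    · rw [h]
      apply mul_eq_zero_of_right
      apply mul_eq_zero_of_right
      have hne : c*u1 - u0 ≠ 0 := by nlinarith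
      rw [div_mul_eq_mul_div, div_mul_eq_mul_div, sub_div' hne, sub_div' hne, div_pow, div_pow]
      field_simp
      ring
  rw [hd, mul_zero]
end

section
/- With the matrices 𝒜⁰, 𝒜¹ of the 1+1 Müller-Israel-Stewart system, the row vector l² = (0, (ϱ+q)c/u⁰, 1) is a left eigenvector of (𝒜⁰)^{-1}𝒜¹ with eigenvalue λ² = (u¹ + c·u⁰)/(c·u¹ + u⁰); i.e., l²·(𝒜⁰)^{-1}𝒜¹ = λ²·l². -/
set_option maxHeartbeats 1000000

theorem stmt13 (u0 u1 ϱ q c : ℝ) (hu : u0^2 = 1 + u1^2) (hu0 : 1 ≤ u0)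
    (hq : 0 < ϱ + q) (hc0 : 0 < c) (hc1 : c < 1) :
    let A0 : Matrix (Fin 3) (Fin 3) ℝ :=
      !![u0, (ϱ+q)*u1/u0, 0; 0, (ϱ+q)/u0, u1/u0; 0, c^2*(ϱ+q)*u1/u0, u0]
    let A1 : Matrix (Fin 3) (Fin 3) ℝ :=
      !![u1, ϱ+q, 0; 0, (ϱ+q)*u1/u0^2, 1; 0, c^2*(ϱ+q), u1]
    let l : Fin 3 → ℝ := ![0, (ϱ+q)*c/u0, 1]
    Matrix.vecMul l (A0⁻¹ * A1) = ((u1 + c*u0)/(c*u1 + u0)) • l := by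
  intro A0 A1 l
  have hu0' : (0:ℝ) < u0 := lt_of_lt_of_le one_pos hu0
  have hu0n : u0 ≠ 0 := ne_of_gt hu0'
  have hqn : ϱ + q ≠ 0 := ne_of_gt hq
  have hc2 : c^2 < 1 := by nlinarith
  have hs : 0 < u0^2 - c^2*u1^2 := by nlinarith [sq_nonneg u1]
  have hsn : u0^2 - c^2*u1^2 ≠ 0 := ne_of_gt hs
  have habs : |u1| < u0 := by
    rw [abs_lt]; constructor <;> nlinarith
  have hden : 0 < c*u1 + u0 := by
    have h1 : c*(-|u1|) ≤ c*u1 := mul_le_mul_of_nonneg_left (neg_abs_le u1) hc0.le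
    nlinarith [abs_nonneg u1]
  have hdenn : c*u1 + u0 ≠ 0 := ne_of_gt hden
  set s : ℝ := u0^2 - c^2*u1^2 with hs_def
  have hB : A0⁻¹ = !![1/u0, -(u0*u1)/s, u1^2/(u0*s);
                      0, u0^3/((ϱ+q)*s), -(u0*u1)/((ϱ+q)*s);
                      0, -(c^2*u0*u1)/s, u0/s] := by
    apply Matrix.inv_eq_left_inv
    ext i j
    fin_cases i <;> fin_cases j <;>
      simp [A0, Matrix.mul_apply, Fin.sum_univ_three, Matrix.one_apply,
        Matrix.vecHead, Matrix.vecTail] <;>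
      field_simp <;> ring
  rw [hB, ← Matrix.vecMul_vecMul]
  funext j
  fin_cases j <;>
    simp [A1, l, Matrix.vecMul, dotProduct, Fin.sum_univ_three,
      Matrix.vecHead, Matrix.vecTail] <;>
    field_simp <;> ring
end

section
/- Let c = c(ϱ, q) > 0 be defined by c² = p'(ϱ) + ζ(ϱ)/(τ₀(ϱ)(ϱ+q)) for ϱ + q > 0, where p, ζ, τ₀ are differentiable functions of ϱ with τ₀ > 0. If ∂c/∂q = −c/(ϱ+q) for all (ϱ, q) with ϱ+q > 0, then (1/2)·ζ(ϱ)/(τ₀(ϱ)(ϱ+q)) + p'(ϱ) = 0 for all such (ϱ, q), and consequently p'(ϱ) = 0 and ζ(ϱ) = 0 for all ϱ. -/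
theorem stmt15 (p ζ τ₀ : ℝ → ℝ) (c : ℝ → ℝ → ℝ)
    (hp : Differentiable ℝ p) (hζ : Differentiable ℝ ζ) (hτ : Differentiable ℝ τ₀)
    (hτpos : ∀ ϱ, 0 < τ₀ ϱ)
    (hcpos : ∀ ϱ q, 0 < ϱ + q → 0 < c ϱ q)
    (hc2 : ∀ ϱ q, 0 < ϱ + q → (c ϱ q)^2 = deriv p ϱ + ζ ϱ / (τ₀ ϱ * (ϱ + q)))
    (hdq : ∀ ϱ q, 0 < ϱ + q → HasDerivAt (fun s => c ϱ s) (-(c ϱ q)/(ϱ+q)) q) :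
    (∀ ϱ q, 0 < ϱ + q → (1/2) * (ζ ϱ / (τ₀ ϱ * (ϱ + q))) + deriv p ϱ = 0) ∧
    (∀ ϱ, deriv p ϱ = 0) ∧ (∀ ϱ, ζ ϱ = 0) := by
  have key : ∀ ϱ q, 0 < ϱ + q → (1/2) * (ζ ϱ / (τ₀ ϱ * (ϱ + q))) + deriv p ϱ = 0 := by
    intro ϱ q hq
    set A := deriv p ϱ with hA
    set B := ζ ϱ / τ₀ ϱ with hB
    have hτne : τ₀ ϱ ≠ 0 := (hτpos ϱ).ne'
    have hqne : ϱ + q ≠ 0 := hq.ne'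
    -- derivative of s ↦ A + B/(ϱ+s) at q
    have hid : HasDerivAt (fun s : ℝ => ϱ + s) 1 q := by
      simpa using (hasDerivAt_id q).const_add ϱ
    have h1 : HasDerivAt (fun s : ℝ => A + B / (ϱ + s)) (-B / (ϱ + q)^2) q := by
      have h : HasDerivAt (fun s : ℝ => A + B / (ϱ + s)) ((0 * (ϱ + q) - B * 1) / (ϱ + q) ^ 2) q :=
        ((hasDerivAt_const q B).fun_div hid hqne).const_add A
      convert h using 1
      ring
    -- derivative of s ↦ (c ϱ s)^2 at q
    have h2 : HasDerivAt (fun s : ℝ => (c ϱ s)^2)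
        (2 * (c ϱ q) ^ 1 * (-(c ϱ q)/(ϱ+q))) q := by
      simpa using (hdq ϱ q hq).fun_pow 2
    -- they agree eventually
    have heq : (fun s : ℝ => (c ϱ s)^2) =ᶠ[nhds q] (fun s : ℝ => A + B / (ϱ + s)) := by
      have hopen : IsOpen {s : ℝ | 0 < ϱ + s} := by
        have : Continuous (fun s : ℝ => ϱ + s) := by continuity
        exact isOpen_lt continuous_const this
      filter_upwards [hopen.mem_nhds hq] with s hs
      rw [hc2 ϱ s hs, hB, div_div]
    have h2' : HasDerivAt (fun s : ℝ => A + B / (ϱ + s))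
        (2 * (c ϱ q) ^ 1 * (-(c ϱ q)/(ϱ+q))) q := h2.congr_of_eventuallyEq heq.symm
    have huniq : 2 * (c ϱ q) ^ 1 * (-(c ϱ q)/(ϱ+q)) = -B / (ϱ + q)^2 :=
      h2'.unique h1
    have hc2' : (c ϱ q)^2 = A + B / (ϱ + q) := by
      rw [hc2 ϱ q hq, hB, div_div]
    rw [pow_one] at huniq
    have hcc : c ϱ q * c ϱ q = A + B / (ϱ + q) := by rw [← pow_two]; exact hc2'
    field_simp at huniq hcc
    have h' : (2 * A * (ϱ + q) + B) * (ϱ + q)^2 = 0 := by linear_combination (-(ϱ + q)^2) * huniq - 2 * (ϱ + q)^2 * hcc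
    have h'' : 2 * A * (ϱ + q) + B = 0 := by
      rcases mul_eq_zero.mp h' with h | h
      · exact h
      · exact absurd h (pow_ne_zero 2 hqne)
    have hgoal : (1/2) * (B / (ϱ + q)) + A = 0 := by
      field_simp
      linarith
    rw [← div_div, ← hB]
    exact hgoal
  have hz : ∀ ϱ, ζ ϱ = 0 := by
    intro ϱ
    have h1 := key ϱ (1 - ϱ) (by linarith)
    have h2 := key ϱ (2 - ϱ) (by linarith)
    have e1 : ϱ + (1 - ϱ) = 1 := by ring
    have e2 : ϱ + (2 - ϱ) = 2 := by ring
    rw [e1] at h1; rw [e2] at h2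
    have hτne : τ₀ ϱ ≠ 0 := (hτpos ϱ).ne'
    field_simp at h1 h2
    linear_combination 2 * h1 - h2
  refine ⟨key, ?_, hz⟩
  intro ϱ
  have h1 := key ϱ (1 - ϱ) (by linarith)
  have e1 : ϱ + (1 - ϱ) = 1 := by ring
  rw [e1, hz ϱ] at h1
  simpa using h1
end

section
/- Let Y : (0,∞) → ℝ³, n ↦ (Y_ϱ(n), n, Y_Π(n)) be an integral curve of the vector field V(ϱ, n, Π) = ((ϱ + p(ϱ,n) + Π)/n, 1, ζ(ϱ,n)/(n·τ₀(ϱ,n))), where p is globally Lipschitz on ℝ × ℝ⁺, ζ/τ₀ is bounded with bounded derivatives, and τ₀ ≥ c > 0. Then the maximal integral curve through any point (ϱ₀, n₀, Π₀) with n₀ > 0 is defined for all n ∈ (0, ∞). -/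
open Set Filter Metric Real
open scoped NNReal Topology

variable {E : Type*} [NormedAddCommGroup E] [NormedSpace ℝ E] [CompleteSpace E]

/-- Local existence for a globally Lipschitz (in space) ODE on a short interval. -/
lemma localODE (v : ℝ → E → E) (L : ℝ≥0) (hLip : ∀ t, LipschitzWith L (v t))
    (hcont : ∀ x, Continuous fun t => v t x) (a b t₀ : ℝ) (x₀ : E)
    (ht₀ : t₀ ∈ Icc a b) (hlen : max (b - t₀) (t₀ - a) ≤ 1 / (2 * ((L : ℝ) + 1))) :
    ∃ f : ℝ → E, f t₀ = x₀ ∧ ∀ t ∈ Icc a b, HasDerivWithinAt f (v t (f t)) (Icc a b) t := by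
  obtain ⟨M0, hM0⟩ := (isCompact_Icc (a := a) (b := b)).exists_bound_of_continuousOn
    ((hcont x₀).continuousOn)
  set δ : ℝ := 1 / (2 * ((L : ℝ) + 1)) with hδdef
  have hL0 : (0:ℝ) ≤ L := L.coe_nonneg
  have hδpos : 0 < δ := by positivity
  set M : ℝ := max M0 0 with hMdef
  have hM : ∀ t ∈ Icc a b, ‖v t x₀‖ ≤ M := fun t ht => (hM0 t ht).trans (le_max_left _ _)
  have hMpos : 0 ≤ M := le_max_right _ _
  set R : ℝ := 2 * M * δ + 1 with hRdef
  have hRpos : (0:ℝ) ≤ R := by positivity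
  have hpl : IsPicardLindelof v (tmin := a) (tmax := b) ⟨t₀, ht₀⟩ x₀ ⟨R, hRpos⟩ 0
      ⟨M + L * R, by positivity⟩ L :=
    { lipschitzOnWith := fun t _ => (hLip t).lipschitzOnWith
      continuousOn := fun x _ => (hcont x).continuousOn
      norm_le := by
        intro t ht x hx
        replace hx : x ∈ closedBall x₀ R := hx
        have h1 : ‖v t x - v t x₀‖ ≤ (L:ℝ) * R := by
          have := (hLip t).dist_le_mul x x₀
          rw [dist_eq_norm, dist_eq_norm] at this
          exact this.trans (by
            have := mem_closedBall_iff_norm.mp hx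
            nlinarith)
        calc ‖v t x‖ ≤ ‖v t x₀‖ + ‖v t x - v t x₀‖ := by
              have := norm_add_le (v t x₀) (v t x - v t x₀); simpa using this
          _ ≤ M + (L:ℝ) * R := add_le_add (hM t ht) h1
      mul_max_le := by
        show (M + (L:ℝ) * R) * max (b - t₀) (t₀ - a) ≤ R - ((0:ℝ≥0):ℝ)
        rw [NNReal.coe_zero, sub_zero]
        have hC0 : 0 ≤ M + (L:ℝ) * R := by positivity
        have h1 : (M + (L:ℝ) * R) * max (b - t₀) (t₀ - a) ≤ (M + (L:ℝ) * R) * δ :=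
          mul_le_mul_of_nonneg_left hlen hC0
        refine h1.trans ?_
        have hLδ : (L:ℝ) * δ ≤ 1 / 2 := by
          rw [hδdef, mul_one_div, div_le_div_iff₀ (by positivity) (by norm_num : (0:ℝ) < 2)]
          nlinarith
        nlinarith }
  obtain ⟨f, hf0, hf⟩ := hpl.exists_eq_forall_mem_Icc_hasDerivWithinAt₀
  exact ⟨f, hf0, hf⟩

lemma glueODE (v : ℝ → E → E) {a b c : ℝ} (hab : a ≤ b) (hbc : b ≤ c) {f g : ℝ → E}
    (hfg : f b = g b)
    (hf : ∀ t ∈ Icc a b, HasDerivWithinAt f (v t (f t)) (Icc a b) t)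
    (hg : ∀ t ∈ Icc b c, HasDerivWithinAt g (v t (g t)) (Icc b c) t) :
    ∃ h : ℝ → E, (∀ t ∈ Icc a b, h t = f t) ∧ (∀ t ∈ Icc b c, h t = g t) ∧
      ∀ t ∈ Icc a c, HasDerivWithinAt h (v t (h t)) (Icc a c) t := by
  refine ⟨fun s => if s ≤ b then f s else g s, ?_, ?_, ?_⟩
  · intro t ht; simp [ht.2]
  · intro t ht
    rcases eq_or_lt_of_le ht.1 with h | h
    · simp [← h, hfg]
    · simp [not_le.mpr h]
  · set h : ℝ → E := fun s => if s ≤ b then f s else g s with hh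
    have hfh : EqOn h f (Icc a b) := fun t ht => by simp [hh, ht.2]
    have hgh : EqOn h g (Icc b c) := fun t ht => by
      rcases eq_or_lt_of_le ht.1 with h' | h'
      · simp [hh, ← h', hfg]
      · simp [hh, not_le.mpr h']
    have D1 : ∀ t ∈ Icc a b, HasDerivWithinAt h (v t (h t)) (Icc a b) t := by
      intro t ht
      have e : h t = f t := hfh ht
      rw [e]
      exact (hf t ht).congr (fun s hs => hfh hs) e
    have D2 : ∀ t ∈ Icc b c, HasDerivWithinAt h (v t (h t)) (Icc b c) t := by
      intro t ht
      have e : h t = g t := hgh ht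
      rw [e]
      exact (hg t ht).congr (fun s hs => hgh hs) e
    intro t ht
    rw [← Icc_union_Icc_eq_Icc hab hbc]
    refine HasDerivWithinAt.union ?_ ?_
    · by_cases h1 : t ∈ Icc a b
      · exact D1 t h1
      · exact HasFDerivWithinAt.of_notMem_closure (by rwa [closure_Icc])
    · by_cases h2 : t ∈ Icc b c
      · exact D2 t h2
      · exact HasFDerivWithinAt.of_notMem_closure (by rwa [closure_Icc])

lemma globalODE (v : ℝ → E → E) (L : ℝ≥0) (hLip : ∀ t, LipschitzWith L (v t))
    (hcont : ∀ x, Continuous fun t => v t x) (t₀ : ℝ) (x₀ : E) :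
    ∃ f : ℝ → E, f t₀ = x₀ ∧ ∀ t, HasDerivAt f (v t (f t)) t := by
  set δ : ℝ := 1 / (2 * ((L : ℝ) + 1)) with hδdef
  have hδpos : 0 < δ := by positivity
  have key : ∀ m : ℕ, ∃ f : ℝ → E, f t₀ = x₀ ∧
      ∀ t ∈ Icc (t₀ - (m + 1) * δ) (t₀ + (m + 1) * δ),
        HasDerivWithinAt f (v t (f t)) (Icc (t₀ - (m + 1) * δ) (t₀ + (m + 1) * δ)) t := by
    intro m
    induction m with
    | zero =>
      refine localODE v L hLip hcont _ _ t₀ x₀ ?_ ?_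
      · constructor <;> [nlinarith; nlinarith]
      · simp only [Nat.cast_zero]
        rw [max_le_iff]
        constructor <;> [nlinarith; nlinarith]
    | succ m ih =>
      obtain ⟨f, hf0, hf⟩ := ih
      set lo : ℝ := t₀ - (m + 1) * δ with hlo
      set hi : ℝ := t₀ + (m + 1) * δ with hhi
      have hlohi : lo ≤ hi := by rw [hlo, hhi]; nlinarith [Nat.cast_nonneg (α := ℝ) m]
      have hmem : t₀ ∈ Icc lo hi := by
        constructor <;> [rw [hlo]; rw [hhi]] <;> nlinarith [Nat.cast_nonneg (α := ℝ) m]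
      -- extend to the right
      obtain ⟨gP, hgP0, hgP⟩ := localODE v L hLip hcont hi (hi + δ) hi (f hi)
        ⟨le_refl _, by linarith⟩ (by rw [max_le_iff, ← hδdef]; constructor <;> linarith)
      obtain ⟨h₁, h₁f, _, hh₁⟩ := glueODE v hlohi (by linarith : hi ≤ hi + δ)
        (hgP0.symm) hf hgP
      -- extend to the left
      obtain ⟨gM, hgM0, hgM⟩ := localODE v L hLip hcont (lo - δ) lo lo (h₁ lo)
        ⟨by linarith, le_refl _⟩ (by rw [max_le_iff, ← hδdef]; constructor <;> linarith)
      obtain ⟨h, _, hmid, hh⟩ := glueODE v (by linarith : lo - δ ≤ lo)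
        (by linarith : lo ≤ hi + δ) hgM0 hgM hh₁
      have e1 : t₀ - ((m : ℝ) + 1 + 1) * δ = lo - δ := by rw [hlo]; ring
      have e2 : t₀ + ((m : ℝ) + 1 + 1) * δ = hi + δ := by rw [hhi]; ring
      refine ⟨h, ?_, ?_⟩
      · rw [hmid t₀ ⟨hmem.1, by linarith [hmem.2]⟩,
          h₁f t₀ hmem, hf0]
      · push_cast
        rw [e1, e2]
        exact hh
  choose g hg0 hg using key
  -- agreement between successive solutions, by uniqueness
  have cont : ∀ m, ContinuousOn (g m)
      (Icc (t₀ - (m + 1) * δ) (t₀ + (m + 1) * δ)) :=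
    fun m t ht => ((hg m t ht).continuousWithinAt)
  have hderiv : ∀ (m : ℕ), ∀ t ∈ Ioo (t₀ - (m + 1) * δ) (t₀ + (m + 1) * δ),
      HasDerivAt (g m) (v t (g m t)) t := fun m t ht =>
    (hg m t (Ioo_subset_Icc_self ht)).hasDerivAt (Icc_mem_nhds ht.1 ht.2)
  have hsub : ∀ m : ℕ, Icc (t₀ - (m + 1) * δ) (t₀ + (m + 1) * δ) ⊆
      Icc (t₀ - (m + 1 + 1) * δ) (t₀ + (m + 1 + 1) * δ) := by
    intro m
    apply Icc_subset_Icc <;> nlinarith [Nat.cast_nonneg (α := ℝ) m]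
  have ht₀mem : ∀ m : ℕ, t₀ ∈ Ioo (t₀ - (m + 1) * δ) (t₀ + (m + 1) * δ) := by
    intro m
    constructor <;> nlinarith [Nat.cast_nonneg (α := ℝ) m]
  have agree_succ : ∀ m : ℕ, ∀ t ∈ Icc (t₀ - (m + 1) * δ) (t₀ + (m + 1) * δ),
      g (m + 1) t = g m t := by
    intro m
    have := ODE_solution_unique_of_mem_Icc (v := v) (s := fun _ => univ)
      (fun t _ => (hLip t).lipschitzOnWith) (ht₀mem m)
      (fun t ht => (cont (m+1) t (by push_cast; exact hsub m ht)).mono (by push_cast; exact hsub m))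
      (fun t ht => by
        have := hderiv (m+1) t (by
          have := Ioo_subset_Icc_self ht
          have h2 := hsub m this
          constructor
          · push_cast at h2 ⊢
            rcases eq_or_lt_of_le h2.1 with h | h
            · nlinarith [ht.1, ht.2]
            · exact h
          · push_cast at h2 ⊢
            rcases eq_or_lt_of_le h2.2 with h | h
            · nlinarith [ht.1, ht.2]
            · exact h)
        exact this)
      (fun _ _ => mem_univ _)
      (cont m) (hderiv m) (fun _ _ => mem_univ _)
      (by rw [hg0, hg0])
    exact fun t ht => this ht
  have agree : ∀ m k : ℕ, m ≤ k → ∀ t ∈ Icc (t₀ - (m + 1) * δ) (t₀ + (m + 1) * δ),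
      g k t = g m t := by
    intro m k hmk
    induction k, hmk using Nat.le_induction with
    | base => intro t _; rfl
    | succ k hmk ih =>
      intro t ht
      have hsub2 : Icc (t₀ - ((m:ℝ) + 1) * δ) (t₀ + ((m:ℝ) + 1) * δ) ⊆
          Icc (t₀ - ((k:ℝ) + 1) * δ) (t₀ + ((k:ℝ) + 1) * δ) := by
        apply Icc_subset_Icc <;>
          nlinarith [(Nat.cast_le (α := ℝ)).mpr hmk, hδpos.le]
      rw [agree_succ k t (hsub2 ht), ih t ht]
  -- the global solution
  set idx : ℝ → ℕ := fun t => ⌈|t - t₀| / δ⌉₊ with hidx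
  have hmemidx : ∀ (t : ℝ) (m : ℕ), idx t ≤ m →
      t ∈ Icc (t₀ - (m + 1) * δ) (t₀ + (m + 1) * δ) := by
    intro t m hm
    have h1 : |t - t₀| / δ ≤ m := (Nat.le_ceil _).trans (Nat.cast_le.mpr hm)
    have h2 : |t - t₀| ≤ m * δ := by
      rw [div_le_iff₀ hδpos] at h1; exact h1
    have := abs_le.mp h2
    constructor <;> nlinarith
  set F : ℝ → E := fun t => g (idx t) t with hF
  have hFeq : ∀ m : ℕ, ∀ t ∈ Icc (t₀ - (m + 1) * δ) (t₀ + (m + 1) * δ), F t = g m t := by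
    intro m t ht
    rcases le_total (idx t) m with h | h
    · exact (agree (idx t) m h t (hmemidx t (idx t) le_rfl)).symm
    · exact agree m (idx t) h t ht
  refine ⟨F, ?_, ?_⟩
  · rw [hFeq 0 t₀ (Ioo_subset_Icc_self (ht₀mem 0)), hg0]
  · intro t
    set m : ℕ := idx t + 1 with hm
    have htIoo : t ∈ Ioo (t₀ - (m + 1) * δ) (t₀ + (m + 1) * δ) := by
      have := hmemidx t (idx t) le_rfl
      push_cast [hm]
      constructor <;> nlinarith [this.1, this.2]
    have hd : HasDerivAt (g m) (v t (g m t)) t := hderiv m t htIoo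
    have heq : F =ᶠ[𝓝 t] g m :=
      eventually_of_mem (Ioo_mem_nhds htIoo.1 htIoo.2)
        (fun s hs => hFeq m s (Ioo_subset_Icc_self hs))
    have := hd.congr_of_eventuallyEq heq
    rwa [← hFeq m t (Ioo_subset_Icc_self htIoo)] at this

theorem stmt16 (p Z : ℝ → ℝ → ℝ) (K C : ℝ)
    (hp : LipschitzWith (Real.toNNReal K) (fun x : ℝ × ℝ => p x.1 x.2))
    (hZb : ∀ ϱ n, |Z ϱ n| ≤ C)
    (hZlip : LipschitzWith (Real.toNNReal K) (fun x : ℝ × ℝ => Z x.1 x.2)) :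
    ∀ (ϱ₀ P₀ n₀ : ℝ), 0 < n₀ →
      ∃ Y : ℝ → ℝ × ℝ, Y n₀ = (ϱ₀, P₀) ∧
        ∀ n, 0 < n → HasDerivAt Y
          ((((Y n).1 + p (Y n).1 n + (Y n).2) / n, Z (Y n).1 n / n)) n := by
  intro ϱ₀ P₀ n₀ hn₀
  set K' : ℝ≥0 := Real.toNNReal K with hK'
  set v : ℝ → (ℝ × ℝ) → (ℝ × ℝ) := fun t x =>
    (x.1 + p x.1 (Real.exp t) + x.2, Z x.1 (Real.exp t)) with hv
  have hinner : ∀ t : ℝ, LipschitzWith 1 (fun x : ℝ × ℝ => (x.1, Real.exp t)) := by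
    intro t
    have := (LipschitzWith.prodMk_right (α := ℝ) (Real.exp t)).comp
      (LipschitzWith.prod_fst (α := ℝ) (β := ℝ))
    rw [mul_one] at this
    exact this
  have hLip : ∀ t, LipschitzWith ((1 + K' * 1 + 1) ⊔ (K' * 1)) (v t) := by
    intro t
    apply LipschitzWith.prodMk
    · exact (LipschitzWith.prod_fst.add (hp.comp (hinner t))).add LipschitzWith.prod_snd
    · exact hZlip.comp (hinner t)
  have hcont : ∀ x : ℝ × ℝ, Continuous fun t => v t x := by
    intro x
    apply Continuous.prodMk
    · exact (continuous_const.add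
        (hp.continuous.comp (continuous_const.prodMk Real.continuous_exp))).add
        continuous_const
    · exact hZlip.continuous.comp (continuous_const.prodMk Real.continuous_exp)
  obtain ⟨W, hW0, hW⟩ := globalODE v _ hLip hcont (Real.log n₀) (ϱ₀, P₀)
  refine ⟨fun n => W (Real.log n), hW0, ?_⟩
  intro n hn
  have hexp : Real.exp (Real.log n) = n := Real.exp_log hn
  have h1 := HasDerivAt.scomp (𝕜 := ℝ) (𝕜' := ℝ) n (hW (Real.log n)) (Real.hasDerivAt_log hn.ne')
  refine h1.congr_deriv ?_
  simp [hv, hexp, Prod.smul_def, smul_eq_mul, div_eq_inv_mul]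
end

section
/- Suppose φ : [n₀, N) → ℝ is continuous and satisfies φ(n) = φ₀ + ∫_{n₀}^{n} (E(s)^{-1}/s) ∫_{n₀}^{s} E(s')·(φ(s') − 1)/s' · w(s') ds' ds, where φ₀ < 0, w ≥ 0 is continuous, and E > 0 is continuous. Then φ(n) < 0 for all n ∈ [n₀, N). -/
open Set Filter Topology

private lemma intnonpos {a b : ℝ} {f : ℝ → ℝ} (hab : a ≤ b)
    (hf : ∀ u ∈ Set.Icc a b, f u ≤ 0) : (∫ u in a..b, f u) ≤ 0 := by
  have h := intervalIntegral.integral_nonneg (f := fun u => -f u) (μ := MeasureTheory.volume)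
    hab (fun u hu => by simpa using hf u hu)
  rw [intervalIntegral.integral_neg] at h
  linarith

theorem stmt17 (n₀ N φ₀ : ℝ) (hn₀ : 0 < n₀) (hN : n₀ < N)
    (φ w E : ℝ → ℝ)
    (hφ : ContinuousOn φ (Set.Ico n₀ N))
    (hw : Continuous w) (hw0 : ∀ s, 0 ≤ w s)
    (hE : Continuous E) (hE0 : ∀ s, 0 < E s)
    (hφ₀ : φ₀ < 0)
    (hid : ∀ n ∈ Set.Ico n₀ N,
      φ n = φ₀ + ∫ s in n₀..n, (E s)⁻¹ / s * ∫ t in n₀..s, E t * (φ t - 1) / t * w t) :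
    ∀ n ∈ Set.Ico n₀ N, φ n < 0 := by
  have hφn₀ : φ n₀ = φ₀ := by
    have := hid n₀ ⟨le_rfl, hN⟩
    simpa [intervalIntegral.integral_same] using this
  by_contra hcon
  push_neg at hcon
  obtain ⟨b, hbmem, hb0⟩ := hcon
  set B : Set ℝ := {x | x ∈ Set.Ico n₀ N ∧ 0 ≤ φ x} with hB
  have hBsub : B ⊆ Set.Ico n₀ N := fun x hx => hx.1
  have hBne : B.Nonempty := ⟨b, hbmem, hb0⟩
  have hBbdd : BddBelow B := ⟨n₀, fun x hx => hx.1.1⟩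
  set n₁ := sInf B with hn₁def
  have hn₁ge : n₀ ≤ n₁ := le_csInf hBne (fun x hx => hx.1.1)
  have hn₁lt : n₁ < N := lt_of_le_of_lt (csInf_le hBbdd ⟨hbmem, hb0⟩) hbmem.2
  have hn₁mem : n₁ ∈ Set.Ico n₀ N := ⟨hn₁ge, hn₁lt⟩
  -- φ < 0 before n₁
  have hneg : ∀ t, n₀ ≤ t → t < n₁ → φ t < 0 := by
    intro t ht ht'
    by_contra h
    push_neg at h
    exact absurd (csInf_le hBbdd ⟨⟨ht, ht'.trans hn₁lt⟩, h⟩) (not_le.mpr ht')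
  -- φ n₁ ≥ 0 by continuity from B
  have hcl : n₁ ∈ closure B := csInf_mem_closure hBne hBbdd
  haveI hNB : (𝓝[B] n₁).NeBot := mem_closure_iff_nhdsWithin_neBot.mp hcl
  have hcont : ContinuousWithinAt φ B n₁ := (hφ n₁ hn₁mem).mono hBsub
  have hφn₁0 : 0 ≤ φ n₁ :=
    ge_of_tendsto hcont (eventually_nhdsWithin_of_forall (fun x hx => hx.2))
  -- n₀ < n₁
  have hlt : n₀ < n₁ := by
    rcases lt_or_eq_of_le hn₁ge with h | h
    · exact h
    · exfalso; rw [← h, hφn₀] at hφn₁0; linarith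
  -- φ n₁ ≤ 0 by continuity from the left
  have hcl2 : n₁ ∈ closure (Set.Ico n₀ n₁) := by
    rw [closure_Ico hlt.ne]
    exact ⟨hn₁ge, le_rfl⟩
  haveI hNB2 : (𝓝[Set.Ico n₀ n₁] n₁).NeBot := mem_closure_iff_nhdsWithin_neBot.mp hcl2
  have hcont2 : ContinuousWithinAt φ (Set.Ico n₀ n₁) n₁ :=
    (hφ n₁ hn₁mem).mono (fun x hx => ⟨hx.1, hx.2.trans hn₁lt⟩)
  have hφn₁le : φ n₁ ≤ 0 :=
    le_of_tendsto hcont2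
      (eventually_nhdsWithin_of_forall (fun x hx => (hneg x hx.1 hx.2).le))
  -- φ ≤ 0 on Icc n₀ n₁
  have hle : ∀ t ∈ Set.Icc n₀ n₁, φ t ≤ 0 := by
    intro t ht
    rcases lt_or_eq_of_le ht.2 with h | h
    · exact (hneg t ht.1 h).le
    · rw [h]; exact hφn₁le
  -- conclude
  have hval := hid n₁ hn₁mem
  have houter : (∫ s in n₀..n₁, (E s)⁻¹ / s * ∫ t in n₀..s, E t * (φ t - 1) / t * w t) ≤ 0 := by
    apply intnonpos hn₁ge
    intro s hs
    have hinner : (∫ t in n₀..s, E t * (φ t - 1) / t * w t) ≤ 0 := by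
      apply intnonpos hs.1
      intro t ht
      have ht' : t ∈ Set.Icc n₀ n₁ := ⟨ht.1, ht.2.trans hs.2⟩
      have h1 : φ t - 1 ≤ 0 := by have := hle t ht'; linarith
      have h2 : E t * (φ t - 1) / t ≤ 0 :=
        div_nonpos_of_nonpos_of_nonneg
          (mul_nonpos_of_nonneg_of_nonpos (hE0 t).le h1)
          (hn₀.le.trans ht.1)
      exact mul_nonpos_of_nonpos_of_nonneg h2 (hw0 t)
    have h3 : 0 ≤ (E s)⁻¹ / s :=
      div_nonneg (inv_nonneg.mpr (hE0 s).le) (hn₀.le.trans hs.1)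
    exact mul_nonpos_of_nonneg_of_nonpos h3 hinner
  have : φ n₁ < 0 := by rw [hval]; linarith
  linarith
end
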